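/- In a ≺-smooth fitness landscape, along any ascent x⁰, x¹, …, x^T (each step a single-bit flip strictly increasing fitness, ending at a local peak), the set of correct indices is monotone nondecreasing: φ⊖(x⁰) ⊆ φ⊖(x¹) ⊆ … ⊆ φ⊖(x^T) = [n]. -/

import Mathlib

variable {n : ℕ}

def flipBit (x : Fin n → Bool) (i : Fin n) : Fin n → Bool :=
  Function.update x i (!(x i))

def PrecSmooth (r : Fin n → Fin n → Prop) (f : (Fin n → Bool) → ℤ)
    (xs : Fin n → Bool) : Prop :=
  ∀ (j : Fin n) (x : Fin n → Bool), (∀ i, r i j → x i = xs i) →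
    f (Function.update x j (xs j)) > f (Function.update x j (!(xs j)))

/-- `i` is correct at `x` (`i ∈ φ⊖(x)`): every `j ⪯ i` is in the in-map
`φ⁻(x)`, i.e. flipping `j` does not increase fitness. -/
def Correct (r : Fin n → Fin n → Prop) (f : (Fin n → Bool) → ℤ)
    (x : Fin n → Bool) (i : Fin n) : Prop :=
  ∀ j, (r j i ∨ j = i) → f (flipBit x j) ≤ f x

/-- Along any ascent in a `≺`-smooth landscape, the set of correct indices
`φ⊖` is monotone nondecreasing, and at the final local peak every index is
correct. -/
lemma correct_eq_opt (f : (Fin n → Bool) → ℤ) (r : Fin n → Fin n → Prop)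
    (hr : IsStrictOrder (Fin n) r) (xs : Fin n → Bool) (hs : PrecSmooth r f xs)
    (x : Fin n → Bool) (i : Fin n) (hc : Correct r f x i) :
    ∀ j, (r j i ∨ j = i) → x j = xs j := by
  haveI := hr.toIrrefl; haveI := hr.toIsTrans
  have wf : WellFounded r := Finite.wellFounded_of_trans_of_irrefl r
  intro j
  induction j using wf.induction with
  | _ j ih =>
    intro hji
    by_contra hne
    have hx : x j = !xs j := by
      cases hxs : xs j <;> cases hxj : x j <;> simp_all
    have hall : ∀ k, r k j → x k = xs k := by
      intro k hk
      apply ih k hk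
      rcases hji with h | h
      · exact Or.inl (Trans.trans hk h)
      · subst h; exact Or.inl hk
    have hgt := hs j x hall
    have hle := hc j hji
    have h1 : flipBit x j = Function.update x j (xs j) := by
      unfold flipBit; rw [hx]; simp
    have h2 : Function.update x j (!xs j) = x := by
      rw [← hx]; exact Function.update_eq_self j x
    rw [h1] at hle
    rw [h2] at hgt
    omega

lemma correct_step (f : (Fin n → Bool) → ℤ) (r : Fin n → Fin n → Prop)
    (hr : IsStrictOrder (Fin n) r) (xs : Fin n → Bool) (hs : PrecSmooth r f xs)
    (x : Fin n → Bool) (k : Fin n) (hlt : f x < f (flipBit x k))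
    (i : Fin n) (hc : Correct r f x i) : Correct r f (flipBit x k) i := by
  haveI := hr.toIsTrans
  have hkni : ¬ (r k i ∨ k = i) := fun h => absurd (hc k h) (not_le.mpr hlt)
  intro j hji
  have heq : ∀ m, (r m i ∨ m = i) → flipBit x k m = xs m := by
    intro m hm
    have hmk : m ≠ k := fun h => hkni (h ▸ hm)
    rw [show flipBit x k m = x m from Function.update_of_ne hmk _ _]
    exact correct_eq_opt f r hr xs hs x i hc m hm
  have hall : ∀ m, r m j → flipBit x k m = xs m := by
    intro m hm
    apply heq
    rcases hji with h | h
    · exact Or.inl (Trans.trans hm h)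
    · subst h; exact Or.inl hm
  have hgt := hs j (flipBit x k) hall
  have hxj : flipBit x k j = xs j := heq j hji
  have h1 : Function.update (flipBit x k) j (xs j) = flipBit x k := by
    rw [← hxj]; exact Function.update_eq_self ..
  have h2 : flipBit (flipBit x k) j = Function.update (flipBit x k) j (!xs j) := by
    show Function.update (flipBit x k) j (!(flipBit x k j)) =
      Function.update (flipBit x k) j (!xs j)
    rw [hxj]
  rw [h1] at hgt
  rw [h2]
  exact le_of_lt hgt

theorem correct_set_monotone_along_ascent
    (f : (Fin n → Bool) → ℤ) (r : Fin n → Fin n → Prop)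
    (hr : IsStrictOrder (Fin n) r) (xs : Fin n → Bool)
    (hs : PrecSmooth r f xs) (T : ℕ) (p : ℕ → (Fin n → Bool))
    (hstep : ∀ t < T, (∃ i, p (t + 1) = flipBit (p t) i) ∧ f (p t) < f (p (t + 1)))
    (hpeak : ∀ i, f (flipBit (p T) i) ≤ f (p T)) :
    (∀ s t, s ≤ t → t ≤ T → ∀ i, Correct r f (p s) i → Correct r f (p t) i) ∧
    (∀ i, Correct r f (p T) i) := by
  have step1 : ∀ t < T, ∀ i, Correct r f (p t) i → Correct r f (p (t + 1)) i := by
    intro t ht i hc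
    obtain ⟨⟨k, hk⟩, hlt⟩ := hstep t ht
    rw [hk] at hlt ⊢
    exact correct_step f r hr xs hs (p t) k hlt i hc
  constructor
  · intro s t hst
    induction t, hst using Nat.le_induction with
    | base => intro _ i hc; exact hc
    | succ t hst ih =>
      intro htT i hc
      have ht : t < T := Nat.lt_of_succ_le htT
      exact step1 t ht i (ih (le_of_lt ht) i hc)
  · intro i j _
    exact hpeak j
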